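/- For x₀ = e1 (first standard basis vector) and ω = 1/√(L1C1): e^{A_I t} x₀ = x₀ for all t, and e^{A_II t} x₀ = cos(ωt)·e1 + √(L1/C1)·sin(ωt)·e3 for all t. -/

import Mathlib

open Matrix

set_option maxHeartbeats 1000000 in
/-- e^{A_I t} e1 = e1 and e^{A_II t} e1 = cos(ωt) e1 + √(L1/C1) sin(ωt) e3,
with ω = 1/√(L1 C1). -/
theorem exp_mode_matrices_on_e1
    (L1 L2 C1 C2 R : ℝ) (hL1 : 0 < L1) (hL2 : 0 < L2) (hC1 : 0 < C1)
    (hC2 : 0 < C2) (hR : 0 < R)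
    (P : Matrix (Fin 4) (Fin 4) ℝ) (hP : P = (1/2 : ℝ) • Matrix.diagonal ![L1, L2, C1, C2])
    (AIq AIIq : Matrix (Fin 4) (Fin 4) ℝ)
    (hAIq : AIq = !![0,0,0,0; 0,0,1,1; 0,-1,0,0; 0,-1,0,-1/R])
    (hAIIq : AIIq = !![0,0,-1,0; 0,0,0,1; 1,0,0,0; 0,-1,0,-1/R])
    (AI AII : Matrix (Fin 4) (Fin 4) ℝ)
    (hAI : AI = (1/2 : ℝ) • (P⁻¹ * AIq)) (hAII : AII = (1/2 : ℝ) • (P⁻¹ * AIIq))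
    (e1 e3 : Fin 4 → ℝ) (he1 : e1 = ![1,0,0,0]) (he3 : e3 = ![0,0,1,0])
    (ω : ℝ) (hω : ω = 1 / Real.sqrt (L1 * C1)) :
    (∀ t : ℝ, NormedSpace.exp (t • AI) *ᵥ e1 = e1) ∧
    (∀ t : ℝ, NormedSpace.exp (t • AII) *ᵥ e1 =
      Real.cos (ω * t) • e1 + (Real.sqrt (L1 / C1) * Real.sin (ω * t)) • e3) := by
  letI : SeminormedRing (Matrix (Fin 4) (Fin 4) ℝ) := Matrix.linftyOpSemiNormedRing
  letI : NormedRing (Matrix (Fin 4) (Fin 4) ℝ) := Matrix.linftyOpNormedRing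
  letI : NormedAlgebra ℝ (Matrix (Fin 4) (Fin 4) ℝ) := Matrix.linftyOpNormedAlgebra
  -- the linear map `M ↦ M *ᵥ e1`, as a continuous additive map
  let L : Matrix (Fin 4) (Fin 4) ℝ →ₗ[ℝ] (Fin 4 → ℝ) :=
    { toFun := fun M => M *ᵥ e1
      map_add' := fun M N => Matrix.add_mulVec M N e1
      map_smul' := fun c M => Matrix.smul_mulVec c M e1 }
  have hLcont : Continuous L := L.continuous_of_finiteDimensional
  -- inverse of P
  have hPinv : P⁻¹ = Matrix.diagonal ![2/L1, 2/L2, 2/C1, 2/C2] := by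
    apply Matrix.inv_eq_right_inv
    ext i j
    fin_cases i <;> fin_cases j <;>
      simp [hP, Matrix.mul_apply, Fin.sum_univ_four, Matrix.diagonal, Matrix.one_apply] <;>
      field_simp
  -- basic actions
  have hA1 : AI *ᵥ e1 = 0 := by
    funext i
    fin_cases i <;>
      simp [hAI, hPinv, hAIq, he1, Matrix.mulVec, dotProduct, Fin.sum_univ_four,
        Matrix.mul_apply, Matrix.diagonal]
  have hB1 : AII *ᵥ e1 = (1/C1) • e3 := by
    funext i
    fin_cases i <;>
      simp [hAII, hPinv, hAIIq, he1, he3, Matrix.mulVec, dotProduct, Fin.sum_univ_four,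
        Matrix.mul_apply, Matrix.diagonal] <;> ring
  have hB3 : AII *ᵥ e3 = (-(1/L1)) • e1 := by
    funext i
    fin_cases i <;>
      simp [hAII, hPinv, hAIIq, he1, he3, Matrix.mulVec, dotProduct, Fin.sum_univ_four,
        Matrix.mul_apply, Matrix.diagonal] <;> ring
  have hω2 : ω^2 = 1/(L1*C1) := by
    rw [hω, div_pow, one_pow, Real.sq_sqrt (mul_pos hL1 hC1).le]
  have hkey : Real.sqrt (L1/C1) * ω = 1/C1 := by
    have h1 : Real.sqrt L1 ≠ 0 := ne_of_gt (Real.sqrt_pos.2 hL1)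
    rw [hω, Real.sqrt_div hL1.le, Real.sqrt_mul hL1.le, div_mul_div_comm, mul_one,
      mul_left_comm, Real.mul_self_sqrt hC1.le, div_mul_cancel_left₀ h1, one_div]
  -- powers of AII on e1
  have hpow : ∀ k : ℕ,
      AII ^ (2*k) *ᵥ e1 = ((-(ω^2))^k) • e1 ∧
      AII ^ (2*k+1) *ᵥ e1 = ((-(ω^2))^k * (1/C1)) • e3 := by
    intro k
    induction k with
    | zero => simp [hB1]
    | succ k ih =>
      have hmix : (1 : ℝ)/C1 * -(1/L1) = -(ω^2) := by
        rw [hω2]; field_simp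
      have heven : AII ^ (2*(k+1)) *ᵥ e1 = ((-(ω^2))^(k+1)) • e1 := by
        have : 2*(k+1) = (2*k+1) + 1 := by ring
        rw [this, pow_succ', ← Matrix.mulVec_mulVec, ih.2, Matrix.mulVec_smul, hB3,
          smul_smul, mul_assoc, hmix, ← pow_succ]
      refine ⟨heven, ?_⟩
      have : 2*(k+1)+1 = (2*(k+1)) + 1 := rfl
      rw [this, pow_succ', ← Matrix.mulVec_mulVec, heven, Matrix.mulVec_smul, hB1, smul_smul]
  constructor
  · -- part I
    intro t
    have hexp : HasSum (fun n : ℕ => ((n.factorial : ℝ))⁻¹ • (t • AI) ^ n)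
        (NormedSpace.exp (t • AI)) := NormedSpace.exp_series_hasSum_exp' (t • AI)
    have hmap : HasSum (fun n : ℕ => ((n.factorial : ℝ))⁻¹ • ((t • AI) ^ n *ᵥ e1))
        (NormedSpace.exp (t • AI) *ᵥ e1) := by
      have := hexp.map L.toAddMonoidHom hLcont
      simpa [L, Function.comp_def, Matrix.smul_mulVec] using this
    have hzero : ∀ n : ℕ, n ≠ 0 → ((n.factorial : ℝ))⁻¹ • ((t • AI) ^ n *ᵥ e1) = 0 := by
      intro n hn
      obtain ⟨m, rfl⟩ := Nat.exists_eq_succ_of_ne_zero hn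
      have hz : (t • AI) ^ (m+1) *ᵥ e1 = 0 := by
        rw [pow_succ, ← Matrix.mulVec_mulVec, Matrix.smul_mulVec, hA1]
        simp
      rw [hz, smul_zero]
    have hone : HasSum (fun n : ℕ => ((n.factorial : ℝ))⁻¹ • ((t • AI) ^ n *ᵥ e1)) e1 := by
      have := hasSum_single (f := fun n : ℕ => ((n.factorial : ℝ))⁻¹ • ((t • AI) ^ n *ᵥ e1)) 0
        (fun b hb => hzero b hb)
      simpa [Matrix.one_mulVec] using this
    exact hmap.unique hone
  · -- part II
    intro t
    have hexp : HasSum (fun n : ℕ => ((n.factorial : ℝ))⁻¹ • (t • AII) ^ n)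
        (NormedSpace.exp (t • AII)) := NormedSpace.exp_series_hasSum_exp' (t • AII)
    have hmap : HasSum (fun n : ℕ => ((n.factorial : ℝ))⁻¹ • ((t • AII) ^ n *ᵥ e1))
        (NormedSpace.exp (t • AII) *ᵥ e1) := by
      have := hexp.map L.toAddMonoidHom hLcont
      simpa [L, Function.comp_def, Matrix.smul_mulVec] using this
    -- even part
    have hevens : HasSum (fun k : ℕ => (((2*k).factorial : ℝ))⁻¹ • ((t • AII) ^ (2*k) *ᵥ e1))
        (Real.cos (ω * t) • e1) := by
      have h := (Real.hasSum_cos (ω * t)).smul_const e1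
      convert h using 2 with k
      rw [smul_pow, Matrix.smul_mulVec, (hpow k).1, smul_smul, smul_smul]
      congr 1
      rw [neg_pow, mul_pow, pow_mul]
      field_simp
      ring
    -- odd part
    have hodds : HasSum (fun k : ℕ => (((2*k+1).factorial : ℝ))⁻¹ • ((t • AII) ^ (2*k+1) *ᵥ e1))
        ((Real.sqrt (L1 / C1) * Real.sin (ω * t)) • e3) := by
      have h := (((Real.hasSum_sin (ω * t)).mul_left (Real.sqrt (L1/C1)))).smul_const e3
      convert h using 2 with k
      rw [smul_pow, Matrix.smul_mulVec, (hpow k).2, smul_smul, smul_smul]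
      congr 1
      have hC1' : (1:ℝ)/C1 = Real.sqrt (L1/C1) * ω := hkey.symm
      rw [neg_pow, mul_pow, hC1', ← pow_mul]
      field_simp
      ring
    have htotal : HasSum (fun n : ℕ => ((n.factorial : ℝ))⁻¹ • ((t • AII) ^ n *ᵥ e1))
        (Real.cos (ω * t) • e1 + (Real.sqrt (L1 / C1) * Real.sin (ω * t)) • e3) :=
      HasSum.even_add_odd hevens hodds
    exact hmap.unique htotal
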